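/- Let (R, {b_i}) be a transitive unital Z_+-ring of finite rank with a regular element R ∈ R ⊗ C satisfying a·R = FPdim(a)·R for all a ∈ R, and suppose R² = d·R in R ⊗ C where d = FPdim(R). Let T be the matrix of multiplication by R on a Z_+-module M with finite Z_+-basis {w_1,...,w_ℓ} on which T has all entries positive integers. Then the trace of T equals d, and consequently ℓ ≤ d. -/

import Mathlib

/-- Key matrix lemma: if `T` has positive entries and `T * T = d • T`, then the
columns of `T` are pairwise proportional (cross-ratio identity). -/
lemma stmt_12_cross {ℓ : ℕ} (d : ℕ) (T : Matrix (Fin ℓ) (Fin ℓ) ℤ)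
    (hTT : T * T = (d : ℤ) • T) (hpos : ∀ i j, 0 < T i j)
    (j j' k m : Fin ℓ) : T k j * T m j' = T m j * T k j' := by
  haveI : Nonempty (Fin ℓ) := ⟨k⟩
  -- pick k₀ minimizing the ratio T k j / T k j'
  obtain ⟨k₀, -, hk₀⟩ := Finset.exists_min_image (Finset.univ : Finset (Fin ℓ))
    (fun i => (T i j : ℚ) / (T i j' : ℚ)) ⟨k, Finset.mem_univ k⟩
  have hmin : ∀ i : Fin ℓ, T k₀ j * T i j' ≤ T i j * T k₀ j' := by
    intro i
    have h := hk₀ i (Finset.mem_univ i)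
    have h1 : (0 : ℚ) < (T k₀ j' : ℚ) := by exact_mod_cast hpos k₀ j'
    have h2 : (0 : ℚ) < (T i j' : ℚ) := by exact_mod_cast hpos i j'
    rw [div_le_div_iff₀ h1 h2] at h
    exact_mod_cast h
  -- the nonnegative vector v i = T i j * T k₀ j' - T k₀ j * T i j' is an
  -- eigenvector of T for d, vanishing at k₀; positivity forces v = 0.
  set v : Fin ℓ → ℤ := fun i => T i j * T k₀ j' - T k₀ j * T i j' with hv
  have hvnonneg : ∀ i, 0 ≤ v i := fun i => sub_nonneg.2 (hmin i)
  have heig : ∀ i, ∑ n, T i n * v n = d * v i := by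
    intro i
    have e1 : ∑ n, T i n * T n j = d * T i j := by
      have := congrFun (congrFun hTT i) j
      simpa [Matrix.mul_apply] using this
    have e2 : ∑ n, T i n * T n j' = d * T i j' := by
      have := congrFun (congrFun hTT i) j'
      simpa [Matrix.mul_apply] using this
    calc ∑ n, T i n * v n
        = (∑ n, T i n * T n j) * T k₀ j' - T k₀ j * ∑ n, T i n * T n j' := by
          rw [Finset.sum_mul, Finset.mul_sum, ← Finset.sum_sub_distrib]
          exact Finset.sum_congr rfl fun n _ => by ring
      _ = d * v i := by rw [e1, e2]; ring
  have hvk₀ : v k₀ = 0 := by simp [hv]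
  have hzero : ∀ i, v i = 0 := by
    have hsum : ∑ n, T k₀ n * v n = 0 := by rw [heig k₀, hvk₀, mul_zero]
    intro i
    have hterms : ∀ n ∈ Finset.univ, 0 ≤ T k₀ n * v n := fun n _ =>
      mul_nonneg (hpos k₀ n).le (hvnonneg n)
    have := (Finset.sum_eq_zero_iff_of_nonneg hterms).1 hsum i (Finset.mem_univ i)
    rcases mul_eq_zero.1 this with h | h
    · exact absurd h (hpos k₀ i).ne'
    · exact h
  -- now deduce the general cross identity
  have hk : T k j * T k₀ j' = T k₀ j * T k j' := sub_eq_zero.1 (hzero k)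
  have hm : T m j * T k₀ j' = T k₀ j * T m j' := sub_eq_zero.1 (hzero m)
  have hcancel : (T k j * T m j') * T k₀ j' = (T m j * T k j') * T k₀ j' := by
    calc (T k j * T m j') * T k₀ j' = (T k j * T k₀ j') * T m j' := by ring
      _ = (T k₀ j * T k j') * T m j' := by rw [hk]
      _ = (T k₀ j * T m j') * T k j' := by ring
      _ = (T m j * T k₀ j') * T k j' := by rw [hm]
      _ = (T m j * T k j') * T k₀ j' := by ring
  exact mul_right_cancel₀ (hpos k₀ j').ne' hcancel

/-- Let R be a (transitive unital Z₊-)ring with an element r (the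
regular element) satisfying r·r = d·r where d = FPdim(r) is a positive integer.
Let M be an R-module with a finite ℤ-basis w₁,...,w_ℓ (a Z₊-module) and let T be
the matrix of multiplication by r in this basis.  If all entries of T are positive
integers, then trace(T) = d and consequently ℓ ≤ d. -/
theorem stmt_12 (R : Type) [Ring R] (d : ℕ) (hd : 0 < d) (r : R)
    (hr : r * r = d • r)
    (M : Type) [AddCommGroup M] [Module R M]
    (ℓ : ℕ) (hℓ : 0 < ℓ) (w : Module.Basis (Fin ℓ) ℤ M)
    (T : Matrix (Fin ℓ) (Fin ℓ) ℤ)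
    (hT : ∀ i j, T i j = w.repr (r • w j) i)
    (hpos : ∀ i j, 0 < T i j) :
    T.trace = (d : ℤ) ∧ ℓ ≤ d := by
  -- Step 1: T * T = d • T
  have hTT : T * T = (d : ℤ) • T := by
    ext i j
    have h1 : r • w j = ∑ k, T k j • w k := by
      conv_lhs => rw [← w.sum_repr (r • w j)]
      exact Finset.sum_congr rfl fun k _ => by rw [hT]
    have h3 : r • (r • w j) = ∑ k, T k j • (r • w k) := by
      rw [h1, Finset.smul_sum]
      exact Finset.sum_congr rfl fun k _ => smul_comm _ _ _
    have h2 : r • (r • w j) = (d : ℕ) • (r • w j) := by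
      rw [← mul_smul, hr, smul_assoc]
    have h4 := h3.symm.trans h2
    have h5 := congrArg (fun x => w.repr x i) h4
    simp only [map_sum, map_smul, map_nsmul, Finsupp.coe_smul, Finsupp.smul_apply,
      Finsupp.coe_finset_sum, Finset.sum_apply] at h5
    have h6 : ∑ k, T k j * T i k = (d : ℤ) * T i j := by
      have := h5
      simp only [smul_eq_mul, nsmul_eq_mul] at this
      calc ∑ k, T k j * T i k = ∑ k, T k j * w.repr (r • w k) i := by
            exact Finset.sum_congr rfl fun k _ => by rw [hT i k]
        _ = (d : ℤ) * w.repr (r • w j) i := this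
        _ = (d : ℤ) * T i j := by rw [hT i j]
    simp only [Matrix.mul_apply, Matrix.smul_apply, smul_eq_mul]
    rw [← h6]
    exact Finset.sum_congr rfl fun k _ => mul_comm _ _
  -- Step 2: trace T = d
  have i0 : Fin ℓ := ⟨0, hℓ⟩
  have key : T.trace * T i0 i0 = (d : ℤ) * T i0 i0 := by
    have hdiag : ∀ i : Fin ℓ, T i i * T i0 i0 = T i0 i * T i i0 := fun i =>
      stmt_12_cross d T hTT hpos i i0 i i0
    calc T.trace * T i0 i0 = ∑ i, T i i * T i0 i0 := by
          rw [Matrix.trace, Finset.sum_mul]; rfl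
      _ = ∑ i, T i0 i * T i i0 := Finset.sum_congr rfl fun i _ => hdiag i
      _ = (T * T) i0 i0 := by rw [Matrix.mul_apply]
      _ = (d : ℤ) * T i0 i0 := by rw [hTT]; simp [Matrix.smul_apply]
  have htrace : T.trace = (d : ℤ) := mul_right_cancel₀ (hpos i0 i0).ne' key
  refine ⟨htrace, ?_⟩
  have hlb : (ℓ : ℤ) ≤ T.trace := by
    calc (ℓ : ℤ) = ∑ _i : Fin ℓ, (1 : ℤ) := by simp
      _ ≤ ∑ i, T i i := Finset.sum_le_sum fun i _ => hpos i i
      _ = T.trace := rfl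
  exact_mod_cast hlb.trans_eq htrace
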